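/- Let ε ∈ (0,1], M ≥ 2ε, ρ ∈ [ε, M - ε], N = ⌊ρ/ε⌋ ≥ 1, and η_ε(v) = ⌊v/ε⌋ + 1. Let f : [0,M] → [0,1] be measurable with ∫₀^M f = ρ. Then ∫₀^{Nε}(1 - f) dv ≤ ∫_{(N+1)ε}^M f dv + ε + (ρ - Nε) and, combining with Chebyshev bounds for η_ε, ∫₀^{Nε}(1 - f) dv + ∫_{(N+1)ε}^M f dv ≤ (2/ε)·∫₀^M η_ε (f - f_min) dv + 2∫_{(N+1)ε}^M f dv where f_min = 𝟙_{[0,Nε]} + ((ρ-Nε)/ε)𝟙_{[Nε,(N+1)ε]}. In particular the mass defect below level Nε is controlled by the mass excess above level (N+1)ε via mass conservation: ∫₀^{Nε}(1-f) dv = ∫_{Nε}^{(N+1)ε} f dv + ∫_{(N+1)ε}^M f dv - (ρ - Nε). -/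

import Mathlib

set_option maxHeartbeats 1000000

open MeasureTheory Set

theorem stmt_14 (ε M ρ : ℝ) (hε : 0 < ε) (hε1 : ε ≤ 1) (hM : 2 * ε ≤ M)
    (hρ : ρ ∈ Icc ε (M - ε))
    (N : ℕ) (hN : (N : ℤ) = ⌊ρ / ε⌋) (hN1 : 1 ≤ N)
    (η : ℝ → ℝ) (hη : ∀ v, η v = (⌊v / ε⌋ : ℝ) + 1)
    (f : ℝ → ℝ) (hfmeas : Measurable f) (hf01 : ∀ v, f v ∈ Icc (0 : ℝ) 1)
    (hfmass : (∫ v in Icc (0 : ℝ) M, f v) = ρ)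
    (fmin : ℝ → ℝ)
    (hfmin : ∀ v, fmin v = (Icc (0 : ℝ) ((N : ℝ) * ε)).indicator (fun _ => (1 : ℝ)) v
      + ((ρ - N * ε) / ε) * (Icc ((N : ℝ) * ε) (((N : ℝ) + 1) * ε)).indicator (fun _ => (1 : ℝ)) v) :
    ((∫ v in Icc (0 : ℝ) ((N : ℝ) * ε), (1 - f v))
        ≤ (∫ v in Icc (((N : ℝ) + 1) * ε) M, f v) + ε + (ρ - N * ε)) ∧
    ((∫ v in Icc (0 : ℝ) ((N : ℝ) * ε), (1 - f v))
        + (∫ v in Icc (((N : ℝ) + 1) * ε) M, f v)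
      ≤ (2 / ε) * (∫ v in Icc (0 : ℝ) M, η v * (f v - fmin v))
        + 2 * ∫ v in Icc (((N : ℝ) + 1) * ε) M, f v) ∧
    ((∫ v in Icc (0 : ℝ) ((N : ℝ) * ε), (1 - f v))
      = (∫ v in Icc ((N : ℝ) * ε) (((N : ℝ) + 1) * ε), f v)
        + (∫ v in Icc (((N : ℝ) + 1) * ε) M, f v) - (ρ - N * ε)) := by
  set a : ℝ := (N : ℝ) * ε with ha_def
  set b : ℝ := ((N : ℝ) + 1) * ε with hb_def
  obtain ⟨hρ1, hρ2⟩ := hρ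
  have hNpos : (0 : ℝ) < N := by exact_mod_cast Nat.cast_pos.mpr hN1
  have ha0 : 0 ≤ a := by positivity
  have hab : a < b := by rw [ha_def, hb_def]; nlinarith
  have haρ : a ≤ ρ := by
    have h1 : ((N : ℝ)) ≤ ρ / ε := by
      have := Int.floor_le (ρ / ε)
      rw [← hN] at this; exact_mod_cast this
    calc a = (N : ℝ) * ε := rfl
      _ ≤ (ρ / ε) * ε := by nlinarith
      _ = ρ := by field_simp
  have hρb : ρ < b := by
    have h1 : ρ / ε < (N : ℝ) + 1 := by
      have := Int.lt_floor_add_one (ρ / ε)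
      rw [← hN] at this; exact_mod_cast this
    have h2 : ρ / ε * ε < ((N : ℝ) + 1) * ε := by nlinarith
    calc ρ = ρ / ε * ε := by field_simp
      _ < b := h2
  have hbM : b ≤ M := by
    have h : a + ε ≤ M := by linarith
    rw [hb_def]; nlinarith
  have haM : a ≤ M := le_of_lt (lt_of_lt_of_le hab hbM)
  have hba : b - a = ε := by rw [ha_def, hb_def]; ring
  set c : ℝ := (ρ - a) / ε with hc_def
  have hc0 : 0 ≤ c := div_nonneg (by linarith) hε.le
  have hc1 : c ≤ 1 := by
    rw [hc_def, div_le_one hε]; linarith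
  have hcε : c * ε = ρ - a := by rw [hc_def]; field_simp
  -- measurability
  have hfmin_eq : ∀ v, fmin v = (Icc (0 : ℝ) a).indicator (fun _ => (1 : ℝ)) v
      + c * (Icc a b).indicator (fun _ => (1 : ℝ)) v := hfmin
  have hfmin_funeq : fmin = fun v => (Icc (0 : ℝ) a).indicator (fun _ => (1 : ℝ)) v
      + c * (Icc a b).indicator (fun _ => (1 : ℝ)) v := funext hfmin_eq
  have hη_funeq : η = fun v : ℝ => ((⌊v / ε⌋ : ℝ) + 1) := funext hη
  have hfmin_meas : Measurable fmin := by
    rw [hfmin_funeq]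
    exact ((measurable_const.indicator measurableSet_Icc).add
      (measurable_const.mul (measurable_const.indicator measurableSet_Icc)))
  have hη_meas : Measurable η := by
    rw [hη_funeq]
    exact (measurable_from_top.comp ((measurable_id.div_const ε).floor)).add measurable_const
  have hfmin_bd : ∀ v, 0 ≤ fmin v ∧ fmin v ≤ 2 := by
    intro v
    rw [hfmin_eq v]
    have h1 : (0:ℝ) ≤ (Icc (0 : ℝ) a).indicator (fun _ => (1 : ℝ)) v :=
      Set.indicator_nonneg (fun _ _ => zero_le_one) v
    have h2 : (0:ℝ) ≤ (Icc a b).indicator (fun _ => (1 : ℝ)) v :=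
      Set.indicator_nonneg (fun _ _ => zero_le_one) v
    have h3 : (Icc (0 : ℝ) a).indicator (fun _ => (1 : ℝ)) v ≤ 1 := by
      by_cases h : v ∈ Icc (0:ℝ) a <;> simp [h]
    have h4 : (Icc a b).indicator (fun _ => (1 : ℝ)) v ≤ 1 := by
      by_cases h : v ∈ Icc a b <;> simp [h]
    constructor
    · have := mul_nonneg hc0 h2; linarith
    · nlinarith
  -- integrability on Icc 0 M
  have hf_int : IntegrableOn f (Icc (0 : ℝ) M) := by
    apply Measure.integrableOn_of_bounded (M := 1) (by simp) hfmeas.aestronglyMeasurable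
    filter_upwards with v
    rw [Real.norm_eq_abs, abs_le]
    exact ⟨by linarith [(hf01 v).1], (hf01 v).2⟩
  have hfmin_int : IntegrableOn fmin (Icc (0 : ℝ) M) := by
    apply Measure.integrableOn_of_bounded (M := 2) (by simp) hfmin_meas.aestronglyMeasurable
    filter_upwards with v
    rw [Real.norm_eq_abs, abs_le]
    exact ⟨by linarith [(hfmin_bd v).1], (hfmin_bd v).2⟩
  have hη_bd : ∀ v ∈ Icc (0:ℝ) M, 0 ≤ η v ∧ η v ≤ M / ε + 1 := by
    intro v hv
    obtain ⟨hv0, hvM⟩ := hv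
    constructor
    · rw [hη v]
      have h : (0 : ℤ) ≤ ⌊v / ε⌋ := Int.floor_nonneg.mpr (by positivity)
      have h' : (0 : ℝ) ≤ (⌊v / ε⌋ : ℝ) := by exact_mod_cast h
      linarith
    · rw [hη v]
      have h1 : (⌊v / ε⌋ : ℝ) ≤ v / ε := Int.floor_le _
      have h2 : v / ε ≤ M / ε := by gcongr
      linarith
  have hg_int : IntegrableOn (fun v => η v * (f v - fmin v)) (Icc (0 : ℝ) M) := by
    apply Measure.integrableOn_of_bounded (M := (M / ε + 1) * 3) (by simp)
      ((hη_meas.mul (hfmeas.sub hfmin_meas)).aestronglyMeasurable)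
    rw [ae_restrict_iff' measurableSet_Icc]
    filter_upwards with v hv
    obtain ⟨hη1, hη2⟩ := hη_bd v hv
    have hfd : |f v - fmin v| ≤ 3 := by
      rw [abs_le]
      constructor
      · linarith [(hf01 v).1, (hfmin_bd v).2]
      · linarith [(hf01 v).2, (hfmin_bd v).1]
    rw [Real.norm_eq_abs, Pi.mul_apply, Pi.sub_apply, abs_mul, abs_of_nonneg hη1]
    have := abs_nonneg (f v - fmin v)
    nlinarith
  -- restriction to subsets
  have hsub1 : Ico (0:ℝ) a ⊆ Icc (0:ℝ) M := fun x hx => ⟨hx.1, le_trans (le_of_lt hx.2) (le_trans hab.le hbM)⟩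
  have hsub2 : Ico a b ⊆ Icc (0:ℝ) M := fun x hx => ⟨le_trans ha0 hx.1, le_trans (le_of_lt hx.2) hbM⟩
  have hsub3 : Icc b M ⊆ Icc (0:ℝ) M := fun x hx => ⟨le_trans (le_trans ha0 hab.le) hx.1, hx.2⟩
  -- splitting lemma for any integrable function on Icc 0 M
  have hsplit : ∀ h : ℝ → ℝ, IntegrableOn h (Icc (0:ℝ) M) →
      (∫ v in Icc (0:ℝ) M, h v) = (∫ v in Ico (0:ℝ) a, h v) + (∫ v in Ico a b, h v)
        + (∫ v in Icc b M, h v) := by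
    intro h hint
    have e1 : Ico (0:ℝ) a ∪ Ico a b = Ico (0:ℝ) b := Ico_union_Ico_eq_Ico ha0 hab.le
    have e2 : Ico (0:ℝ) b ∪ Icc b M = Icc (0:ℝ) M :=
      Ico_union_Icc_eq_Icc (le_trans ha0 hab.le) hbM
    have d1 : Disjoint (Ico (0:ℝ) a) (Ico a b) := by
      apply Set.disjoint_left.mpr
      intro x hx hx'
      exact absurd hx'.1 (not_le.mpr hx.2)
    have d2 : Disjoint (Ico (0:ℝ) b) (Icc b M) := by
      apply Set.disjoint_left.mpr
      intro x hx hx'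
      exact absurd hx'.1 (not_le.mpr hx.2)
    have i1 : IntegrableOn h (Ico (0:ℝ) a) := hint.mono_set hsub1
    have i2 : IntegrableOn h (Ico a b) := hint.mono_set hsub2
    have i3 : IntegrableOn h (Icc b M) := hint.mono_set hsub3
    have i12 : IntegrableOn h (Ico (0:ℝ) b) := by
      rw [← e1]; exact i1.union i2
    calc (∫ v in Icc (0:ℝ) M, h v) = ∫ v in Ico (0:ℝ) b ∪ Icc b M, h v := by rw [e2]
      _ = (∫ v in Ico (0:ℝ) b, h v) + (∫ v in Icc b M, h v) :=
          setIntegral_union d2 measurableSet_Icc i12 i3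
      _ = (∫ v in Ico (0:ℝ) a ∪ Ico a b, h v) + (∫ v in Icc b M, h v) := by rw [e1]
      _ = (∫ v in Ico (0:ℝ) a, h v) + (∫ v in Ico a b, h v) + (∫ v in Icc b M, h v) := by
          rw [setIntegral_union d1 measurableSet_Ico i1 i2]
  -- names for the pieces
  set F1 : ℝ := ∫ v in Ico (0:ℝ) a, f v with hF1
  set F2 : ℝ := ∫ v in Ico a b, f v with hF2
  set F3 : ℝ := ∫ v in Icc b M, f v with hF3
  have hmass : F1 + F2 + F3 = ρ := by rw [← hfmass, hsplit f hf_int]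
  -- Icc/Ico conversions
  have hconst_int : ∀ (s : Set ℝ) (r : ℝ), volume s ≠ ⊤ →
      IntegrableOn (fun _ : ℝ => r) s := by
    intro s r hs
    exact integrableOn_const hs
  have hIccIco1 : (∫ v in Icc (0:ℝ) a, (1 - f v)) = a - F1 := by
    rw [integral_Icc_eq_integral_Ico, hF1]
    have i1 : IntegrableOn f (Ico (0:ℝ) a) := hf_int.mono_set hsub1
    rw [integral_sub (hconst_int _ 1 (by simp)) i1]
    simp [Real.volume_Ico, ENNReal.toReal_ofReal ha0, ha0]
  have hIccIco2 : (∫ v in Icc a b, f v) = F2 := by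
    rw [integral_Icc_eq_integral_Ico, hF2]
  -- bounds
  have hvolIco : (∫ _v in Ico a b, (1:ℝ)) = ε := by
    simp [Real.volume_Ico, hba, ENNReal.toReal_ofReal hε.le, hε.le]
  have hF2le : F2 ≤ ε := by
    have h : F2 ≤ ∫ _v in Ico a b, (1:ℝ) := by
      apply setIntegral_mono_on (hf_int.mono_set hsub2) (hconst_int _ 1 (by simp))
        measurableSet_Ico
      exact fun x _ => (hf01 x).2
    linarith
  have hF3nonneg : 0 ≤ F3 := by
    apply setIntegral_nonneg measurableSet_Icc
    exact fun x _ => (hf01 x).1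
  have hF1le : F1 ≤ a := by
    have h : F1 ≤ ∫ _v in Ico (0:ℝ) a, (1:ℝ) := by
      apply setIntegral_mono_on (hf_int.mono_set hsub1) (hconst_int _ 1 (by simp))
        measurableSet_Ico
      exact fun x _ => (hf01 x).2
    have h2 : (∫ _v in Ico (0:ℝ) a, (1:ℝ)) = a := by
      simp [Real.volume_Ico, ENNReal.toReal_ofReal ha0, ha0]
    linarith
  -- THIRD identity
  have hthird : (∫ v in Icc (0 : ℝ) a, (1 - f v)) = (∫ v in Icc a b, f v) + F3 - (ρ - a) := by
    rw [hIccIco1, hIccIco2]; linarith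
  refine ⟨?_, ?_, hthird⟩
  · -- FIRST inequality
    rw [hthird, hIccIco2]
    linarith
  · -- SECOND inequality
    set K : ℝ := ∫ v in Icc (0 : ℝ) M, η v * (f v - fmin v) with hK
    have hfmin1 : ∀ v ∈ Ico (0:ℝ) a, fmin v = 1 := by
      intro v hv
      have h1 : v ∈ Icc (0:ℝ) a := ⟨hv.1, hv.2.le⟩
      have h2 : v ∉ Icc a b := fun h => absurd h.1 (not_le.mpr hv.2)
      rw [hfmin_eq v, Set.indicator_of_mem h1, Set.indicator_of_notMem h2]
      ring
    have hvol_ne_a : ∀ᵐ v : ℝ, v ≠ a := by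
      rw [ae_iff]
      have h : {x : ℝ | ¬x ≠ a} = {a} := by ext x; simp
      rw [h]; exact measure_singleton a
    have hvol_ne_b : ∀ᵐ v : ℝ, v ≠ b := by
      rw [ae_iff]
      have h : {x : ℝ | ¬x ≠ b} = {b} := by ext x; simp
      rw [h]; exact measure_singleton b
    -- piece 1 bound
    have hdiff_int1 : IntegrableOn (fun v => (N:ℝ) * (f v - fmin v)) (Ico (0:ℝ) a) :=
      ((hf_int.mono_set hsub1).sub (hfmin_int.mono_set hsub1)).const_mul _
    have hK1 : (N : ℝ) * (F1 - a) ≤ ∫ v in Ico (0:ℝ) a, η v * (f v - fmin v) := by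
      have step1 : (∫ v in Ico (0:ℝ) a, (N:ℝ) * (f v - fmin v))
          ≤ ∫ v in Ico (0:ℝ) a, η v * (f v - fmin v) := by
        apply setIntegral_mono_on hdiff_int1 (hg_int.mono_set hsub1) measurableSet_Ico
        intro v hv
        have hfm : fmin v = 1 := hfmin1 v hv
        have hηle : η v ≤ (N : ℝ) := by
          rw [hη v]
          have h1 : ⌊v / ε⌋ < (N : ℤ) := by
            apply Int.floor_lt.2
            push_cast
            rw [div_lt_iff₀ hε]
            exact hv.2
          have h2 : (⌊v / ε⌋ : ℝ) ≤ (N : ℝ) - 1 := by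
            have h3 : (⌊v / ε⌋ : ℤ) ≤ (N : ℤ) - 1 := by omega
            have h4 : ((⌊v / ε⌋ : ℤ) : ℝ) ≤ ((N : ℤ) : ℝ) - 1 := by exact_mod_cast h3
            push_cast at h4
            exact h4
          linarith
        have hfle : f v - fmin v ≤ 0 := by rw [hfm]; linarith [(hf01 v).2]
        nlinarith
      have step2 : (∫ v in Ico (0:ℝ) a, (N:ℝ) * (f v - fmin v)) = (N : ℝ) * (F1 - a) := by
        rw [integral_const_mul _ _]
        congr 1
        rw [integral_sub (hf_int.mono_set hsub1) (hfmin_int.mono_set hsub1)]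
        have h : (∫ v in Ico (0:ℝ) a, fmin v) = ∫ _v in Ico (0:ℝ) a, (1:ℝ) :=
          setIntegral_congr_fun measurableSet_Ico (fun v hv => hfmin1 v hv)
        rw [h]
        simp [Real.volume_Ico, ENNReal.toReal_ofReal ha0, hF1, ha0]
      linarith
    -- piece 2
    have hK2 : (∫ v in Ico a b, η v * (f v - fmin v)) = ((N:ℝ) + 1) * (F2 - (ρ - a)) := by
      have hηmid : ∀ v ∈ Ico a b, η v = (N : ℝ) + 1 := by
        intro v hv
        rw [hη v]
        have hfl : ⌊v / ε⌋ = (N : ℤ) := by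
          rw [Int.floor_eq_iff]
          constructor
          · push_cast
            rw [le_div_iff₀ hε]
            exact hv.1
          · push_cast
            rw [div_lt_iff₀ hε]
            exact hv.2
        rw [hfl]
        push_cast
        ring
      have step1 : (∫ v in Ico a b, η v * (f v - fmin v))
          = ∫ v in Ico a b, ((N:ℝ) + 1) * (f v - fmin v) := by
        apply setIntegral_congr_fun measurableSet_Ico
        intro v hv
        simp only
        rw [hηmid v hv]
      have hfmin2 : (∫ v in Ico a b, fmin v) = ρ - a := by
        have hcongr : (∫ v in Ico a b, fmin v) = ∫ _v in Ico a b, c := by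
          apply setIntegral_congr_ae measurableSet_Ico
          filter_upwards [hvol_ne_a] with v hv hmem
          have h1 : v ∉ Icc (0:ℝ) a := fun h => hv (le_antisymm h.2 hmem.1)
          have h2 : v ∈ Icc a b := ⟨hmem.1, hmem.2.le⟩
          rw [hfmin_eq v, Set.indicator_of_notMem h1, Set.indicator_of_mem h2]
          ring
        rw [hcongr]
        simp only [integral_const, smul_eq_mul]
        rw [measureReal_restrict_apply_univ, measureReal_def, Real.volume_Ico,
          ENNReal.toReal_ofReal (by linarith : (0:ℝ) ≤ b - a), hba, mul_comm]
        exact hcε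
      rw [step1, integral_const_mul _ _,
        integral_sub (hf_int.mono_set hsub2) (hfmin_int.mono_set hsub2), hfmin2, hF2]
    -- piece 3 bound
    have hηf_int3 : IntegrableOn (fun v => η v * f v) (Icc b M) := by
      apply IntegrableOn.mono_set (t := Icc b M) ?_ (subset_refl _)
      apply Measure.integrableOn_of_bounded (M := M / ε + 1) (by simp)
        (hη_meas.mul hfmeas).aestronglyMeasurable
      rw [ae_restrict_iff' measurableSet_Icc]
      filter_upwards with v hv
      obtain ⟨hη1, hη2⟩ := hη_bd v (hsub3 hv)
      rw [Real.norm_eq_abs, Pi.mul_apply, abs_mul, abs_of_nonneg hη1, abs_of_nonneg (hf01 v).1]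
      have hf1 := (hf01 v).2
      have hf0 := (hf01 v).1
      nlinarith
    have hK3 : ((N:ℝ) + 2) * F3 ≤ ∫ v in Icc b M, η v * (f v - fmin v) := by
      have hcongr : (∫ v in Icc b M, η v * (f v - fmin v)) = ∫ v in Icc b M, η v * f v := by
        apply setIntegral_congr_ae measurableSet_Icc
        filter_upwards [hvol_ne_b] with v hv hmem
        have h1 : v ∉ Icc (0:ℝ) a := by
          intro h
          have := h.2
          have hvb : b ≤ v := hmem.1
          linarith
        have h2 : v ∉ Icc a b := fun h => hv (le_antisymm h.2 hmem.1)
        rw [hfmin_eq v, Set.indicator_of_notMem h1, Set.indicator_of_notMem h2]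
        ring
      rw [hcongr]
      have step1 : (∫ v in Icc b M, ((N:ℝ) + 2) * f v) ≤ ∫ v in Icc b M, η v * f v := by
        apply setIntegral_mono_on ((hf_int.mono_set hsub3).const_mul _) hηf_int3
          measurableSet_Icc
        intro v hv
        have hηge : ((N:ℝ) + 2) ≤ η v := by
          rw [hη v]
          have h1 : ((N : ℤ) + 1) ≤ ⌊v / ε⌋ := by
            apply Int.le_floor.2
            push_cast
            rw [le_div_iff₀ hε]
            exact hv.1
          have h2 : ((N:ℝ) + 1) ≤ (⌊v / ε⌋ : ℝ) := by exact_mod_cast h1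
          linarith
        nlinarith [(hf01 v).1]
      have step2 : (∫ v in Icc b M, ((N:ℝ) + 2) * f v) = ((N:ℝ) + 2) * F3 := by
        rw [integral_const_mul _ _, hF3]
      linarith
    -- combine
    have hKsplit : K = (∫ v in Ico (0:ℝ) a, η v * (f v - fmin v))
        + (∫ v in Ico a b, η v * (f v - fmin v))
        + (∫ v in Icc b M, η v * (f v - fmin v)) := hsplit _ hg_int
    have hKlow : (a - F1) + F3 ≤ K := by
      have hF2eq : F2 = ρ - F1 - F3 := by linarith
      have halg : (N:ℝ) * (F1 - a) + ((N:ℝ) + 1) * ((ρ - F1 - F3) - (ρ - a)) + ((N:ℝ) + 2) * F3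
          = (a - F1) + F3 := by ring
      rw [hKsplit, hK2, hF2eq]
      linarith
    rw [hIccIco1]
    have hKnonneg : 0 ≤ K := by linarith
    have h2ε : 2 ≤ 2 / ε := by
      rw [le_div_iff₀ hε]; linarith
    have hfinal : 2 * K ≤ (2 / ε) * K := by nlinarith
    linarith
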